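/- Lower bounds for the probability of substitute PSub(k,p). Let p ∈ {k+1,…,n} (so p ≠ j for all 1 ≤ j ≤ k). Then P(⋂_{j=1}^{k} {Y_j = j} ∩ {X = p}) ≥ max{ 0, Σ_{j=1}^{k} [ P(Y_j = j) + P(X = j) − P(X = j, Y = j) ] + P(X = p) − k }. -/

import Mathlib

open MeasureTheory

theorem psub_kp_lower_bounds
    {Ω : Type*} [MeasurableSpace Ω] (P : Measure Ω) [IsProbabilityMeasure P]
    (n k : ℕ) (hk1 : 1 ≤ k) (hkn : k ≤ n)
    (X : Ω → ℕ) (Y : ℕ → Ω → ℕ) (Yobs : Ω → ℕ)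
    (hX : Measurable X) (hY : ∀ j, Measurable (Y j))
    (hXr : ∀ ω, X ω ∈ Finset.Icc 1 n)
    (hYr : ∀ j ω, Y j ω ∈ Finset.Icc 1 n)
    (hcons : ∀ ω, Yobs ω = Y (X ω) ω)
    (p : ℕ) (hp : p ∈ Finset.Icc (k+1) n) :
    max 0
      ((∑ j ∈ Finset.Icc 1 k,
          ((P {ω | Y j ω = j}).toReal + (P {ω | X ω = j}).toReal - (P {ω | X ω = j ∧ Yobs ω = j}).toReal))
        + (P {ω | X ω = p}).toReal - (k : ℝ)) ≤ (P ((⋂ j ∈ Finset.Icc 1 k, {ω | Y j ω = j}) ∩ {ω | X ω = p})).toReal := by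
  classical
  have hkp : ∀ j ∈ Finset.Icc 1 k, j ≠ p := by
    intro j hj
    have hj' := Finset.mem_Icc.mp hj
    have hp' := Finset.mem_Icc.mp hp
    omega
  set A : ℕ → Set Ω := fun j => {ω | Y j ω = j} with hAdef
  set B : Set Ω := {ω | X ω = p} with hBdef
  set S : ℕ → Set Ω := fun j => A j ∪ {ω | X ω = j} with hSdef
  have hmA : ∀ j, MeasurableSet (A j) := fun j => (hY j) (measurableSet_singleton j)
  have hmX : ∀ j : ℕ, MeasurableSet {ω | X ω = j} := fun j => hX (measurableSet_singleton j)
  have hmS : ∀ j, MeasurableSet (S j) := fun j => (hmA j).union (hmX j)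
  have hmB : MeasurableSet B := hmX p
  -- set rewriting of the target intersection
  have hEeq : (⋂ j ∈ Finset.Icc 1 k, A j) ∩ B = (⋂ j ∈ Finset.Icc 1 k, S j) ∩ B := by
    ext ω
    simp only [Set.mem_inter_iff, Set.mem_iInter, hSdef, Set.mem_union, Set.mem_setOf_eq]
    constructor
    · rintro ⟨h1, h2⟩
      exact ⟨fun j hj => Or.inl (h1 j hj), h2⟩
    · rintro ⟨h1, h2⟩
      refine ⟨fun j hj => ?_, h2⟩
      rcases h1 j hj with h | h
      · exact h
      · have h2' : X ω = p := h2
        exact absurd (h.symm.trans h2') (hkp j hj)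
  -- each joint probability equals P (A j ∩ {X = j})
  have hjoint : ∀ j ∈ Finset.Icc 1 k,
      {ω | X ω = j ∧ Yobs ω = j} = A j ∩ {ω | X ω = j} := by
    intro j _
    ext ω
    simp only [Set.mem_setOf_eq, Set.mem_inter_iff, hAdef]
    constructor
    · rintro ⟨hx, hy⟩
      rw [hcons ω, hx] at hy
      exact ⟨hy, hx⟩
    · rintro ⟨hy, hx⟩
      refine ⟨hx, ?_⟩
      rw [hcons ω, hx]
      exact hy
  -- inclusion-exclusion for each j
  have hIE : ∀ j ∈ Finset.Icc 1 k,
      (P (A j)).toReal + (P {ω | X ω = j}).toReal - (P {ω | X ω = j ∧ Yobs ω = j}).toReal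
        = (P (S j)).toReal := by
    intro j hj
    rw [hjoint j hj]
    have h := measure_union_add_inter (μ := P) (A j) (hmX j)
    have ht : ∀ s : Set Ω, P s ≠ ⊤ := fun s => measure_ne_top P s
    have h' : (P (S j)).toReal + (P (A j ∩ {ω | X ω = j})).toReal
        = (P (A j)).toReal + (P {ω | X ω = j}).toReal := by
      rw [← ENNReal.toReal_add (ht _) (ht _), ← ENNReal.toReal_add (ht _) (ht _), h]
    linarith
  -- Fréchet bound
  have key : ∑ j ∈ Finset.Icc 1 k, (P (S j)).toReal + (P B).toReal - (k : ℝ)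
      ≤ (P ((⋂ j ∈ Finset.Icc 1 k, S j) ∩ B)).toReal := by
    set E : Set Ω := (⋂ j ∈ Finset.Icc 1 k, S j) ∩ B with hEdef
    have hmE : MeasurableSet E :=
      (MeasurableSet.biInter (Finset.Icc 1 k).countable_toSet (fun j _ => hmS j)).inter hmB
    have hcompl : Eᶜ ⊆ (⋃ j ∈ Finset.Icc 1 k, (S j)ᶜ) ∪ Bᶜ := by
      intro ω hω
      by_contra hcon
      apply hω
      simp only [Set.mem_union, Set.mem_iUnion, not_or, not_exists, Set.mem_compl_iff,
        not_not] at hcon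
      exact ⟨Set.mem_iInter₂.mpr (fun j hj => hcon.1 j hj), hcon.2⟩
    have hb : P Eᶜ ≤ ∑ j ∈ Finset.Icc 1 k, P ((S j)ᶜ) + P Bᶜ := by
      calc P Eᶜ ≤ P ((⋃ j ∈ Finset.Icc 1 k, (S j)ᶜ) ∪ Bᶜ) := measure_mono hcompl
        _ ≤ P (⋃ j ∈ Finset.Icc 1 k, (S j)ᶜ) + P Bᶜ := measure_union_le _ _
        _ ≤ ∑ j ∈ Finset.Icc 1 k, P ((S j)ᶜ) + P Bᶜ := by
            gcongr
            exact measure_biUnion_finset_le _ _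
    have hbr : (P Eᶜ).toReal ≤ ∑ j ∈ Finset.Icc 1 k, (P ((S j)ᶜ)).toReal + (P Bᶜ).toReal := by
      have := ENNReal.toReal_mono (by
        refine ENNReal.add_ne_top.mpr ⟨?_, measure_ne_top P _⟩
        exact (ENNReal.sum_lt_top.mpr (fun j _ => measure_lt_top P _)).ne) hb
      rwa [ENNReal.toReal_add (ENNReal.sum_lt_top.mpr (fun j _ => measure_lt_top P _)).ne
        (measure_ne_top P _), ENNReal.toReal_sum (fun j _ => measure_ne_top P _)] at this
    have hco : ∀ s : Set Ω, MeasurableSet s → (P sᶜ).toReal = 1 - (P s).toReal := by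
      intro s hs
      rw [prob_compl_eq_one_sub hs, ENNReal.toReal_sub_of_le prob_le_one ENNReal.one_ne_top,
        ENNReal.toReal_one]
    rw [hco E hmE, hco B hmB] at hbr
    have hSr : ∀ j ∈ Finset.Icc 1 k, (P ((S j)ᶜ)).toReal = 1 - (P (S j)).toReal :=
      fun j _ => hco _ (hmS j)
    rw [Finset.sum_congr rfl hSr, Finset.sum_sub_distrib, Finset.sum_const,
      Nat.card_Icc] at hbr
    simp only [Nat.add_sub_cancel, nsmul_eq_mul, mul_one] at hbr
    linarith
  rw [hEeq, max_le_iff]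
  refine ⟨ENNReal.toReal_nonneg, ?_⟩
  rw [Finset.sum_congr rfl hIE]
  exact key
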